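/- Let p, m be positive integers and for 0 ≤ k ≤ p define r(k) = (p!/(k!(p-k)!)) · k^k · (m+p-k)^{m+p-k} (with 0^0 = 1). Then for all integers k with 0 ≤ k ≤ p/2, one has r(k) ≥ r(p-k). -/

import Mathlib

/-- `r k = (p choose k) * k^k * (m+p-k)^(m+p-k)` (with `0^0 = 1`). -/
def rSeq (p m k : ℕ) : ℕ := Nat.choose p k * k ^ k * (m + p - k) ^ (m + p - k)

lemma lemA (n : ℕ) : ∀ x : ℕ, x ≤ n → (n+1)^x * (n - x) ≤ n^(x+1) := by
  intro x
  induction x with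
  | zero => simp
  | succ x ih =>
    intro hx
    have h1 : (n+1)^(x+1) * (n - (x+1)) = (n+1)^x * ((n - (x+1)) * (n+1)) := by ring
    have h2 : (n - (x+1)) * (n+1) ≤ (n - x) * n := by
      have : x + 1 ≤ n := hx
      nlinarith [Nat.sub_add_cancel this, Nat.sub_add_cancel (le_of_lt this),
        Nat.sub_le n (x+1), Nat.sub_le n x, Nat.sub_le_sub_left (Nat.le_succ x) n]
    calc (n+1)^(x+1) * (n - (x+1)) = (n+1)^x * ((n - (x+1)) * (n+1)) := h1
      _ ≤ (n+1)^x * ((n - x) * n) := Nat.mul_le_mul_left _ h2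
      _ = ((n+1)^x * (n - x)) * n := by ring
      _ ≤ n^(x+1) * n := Nat.mul_le_mul_right _ (ih (le_of_lt hx))
      _ = n^(x+2) := by ring

lemma lemH (x : ℕ) : (x+1)^(x+1) * (x+1)^(x+1) ≤ x^x * (x+2)^(x+2) := by
  rcases Nat.eq_zero_or_pos x with rfl | hx
  · decide
  set n := x^2 + 2*x with hn
  have hL : (x+1)^(x+1) * (x+1)^(x+1) = (n+1)^(x+1) := by
    rw [← mul_pow]; congr 1; ring
  have hR : x^x * (x+2)^(x+2) = n^x * (x+2)^2 := by
    rw [show x+2 = x + 2 from rfl, pow_add, ← mul_assoc, ← mul_pow]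
    congr 2; ring
  rw [hL, hR]
  have hsub : n - x = x^2 + x := by omega
  have hA : (n+1)^x * (x^2 + x) ≤ n^(x+1) := by
    rw [← hsub]; exact lemA n x (by rw [hn]; nlinarith)
  have hpos : 0 < x^2 + x := by nlinarith
  have key : (n+1)^(x+1) * (x^2+x) ≤ (n^x * (x+2)^2) * (x^2+x) := by
    calc (n+1)^(x+1) * (x^2+x) = ((n+1)^x * (x^2+x)) * (n+1) := by ring
      _ ≤ n^(x+1) * (n+1) := Nat.mul_le_mul_right _ hA
      _ = n^x * (n * (n+1)) := by ring
      _ ≤ n^x * ((x+2)^2 * (x^2+x)) := by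
          apply Nat.mul_le_mul_left; rw [hn]; nlinarith
      _ = (n^x * (x+2)^2) * (x^2+x) := by ring
  exact Nat.le_of_mul_le_mul_right key hpos

lemma lemL (u : ℕ) : ∀ v : ℕ, u ≤ v → (u+1)^(u+1) * v^v ≤ u^u * (v+1)^(v+1) := by
  intro v
  induction v with
  | zero => intro h; interval_cases u; decide
  | succ v ih =>
    intro hv
    rcases Nat.lt_or_ge u (v+1) with h | h
    · have huv : u ≤ v := Nat.lt_succ_iff.mp h
      have ihv := ih huv
      have hvpos : 0 < v^v := by
        rcases Nat.eq_zero_or_pos v with rfl | hv0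
        · simp
        · exact Nat.pow_pos hv0
      have key : ((u+1)^(u+1) * (v+1)^(v+1)) * v^v ≤ (u^u * (v+2)^(v+2)) * v^v := by
        calc ((u+1)^(u+1) * (v+1)^(v+1)) * v^v
            = ((u+1)^(u+1) * v^v) * (v+1)^(v+1) := by ring
          _ ≤ (u^u * (v+1)^(v+1)) * (v+1)^(v+1) := Nat.mul_le_mul_right _ ihv
          _ = u^u * ((v+1)^(v+1) * (v+1)^(v+1)) := by ring
          _ ≤ u^u * (v^v * (v+2)^(v+2)) := Nat.mul_le_mul_left _ (lemH v)
          _ = (u^u * (v+2)^(v+2)) * v^v := by ring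
      exact Nat.le_of_mul_le_mul_right key hvpos
    · have : u = v + 1 := le_antisymm hv h
      subst this; exact le_of_eq (by ring)

/-- F s t = t^t * (s-t)^(s-t) is antitone on [a, s/2]. -/
lemma lemMono (s a : ℕ) : ∀ c : ℕ, a ≤ c → 2 * c ≤ s →
    c^c * (s-c)^(s-c) ≤ a^a * (s-a)^(s-a) := by
  intro c
  induction c with
  | zero => intro h _; interval_cases a; exact le_refl _
  | succ c ih =>
    intro hac hcs
    rcases Nat.lt_or_ge a (c+1) with h | h
    · have hac' : a ≤ c := Nat.lt_succ_iff.mp h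
      have hcs' : 2 * c ≤ s := by omega
      refine le_trans ?_ (ih hac' hcs')
      -- step: (c+1)^(c+1) * (s-(c+1))^(s-(c+1)) ≤ c^c * (s-c)^(s-c)
      have hw : s - c = (s - (c+1)) + 1 := by omega
      have hcw : c ≤ s - (c+1) := by omega
      rw [hw]
      exact lemL c (s - (c+1)) hcw
    · have : a = c + 1 := le_antisymm hac h
      subst this; exact le_refl _

/-- For positive integers `p, m` and `0 ≤ k ≤ p/2`, one has `r(k) ≥ r(p-k)`. -/
theorem stmt_2 (p m : ℕ) (hp : 0 < p) (hm : 0 < m) (k : ℕ) (hk : 2 * k ≤ p) :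
    rSeq p m (p - k) ≤ rSeq p m k := by
  have hkp : k ≤ p := by omega
  unfold rSeq
  rw [Nat.choose_symm hkp]
  have h1 : m + p - (p - k) = m + k := by omega
  rw [h1]
  set s := m + p with hs
  have hsk : m + p - k = s - k := rfl
  -- goal: choose p k * (p-k)^(p-k) * (m+k)^(m+k) ≤ choose p k * k^k * (s-k)^(s-k)
  have core : (p-k)^(p-k) * (m+k)^(m+k) ≤ k^k * (s-k)^(s-k) := by
    have hb : m + k = s - (p - k) := by omega
    rw [hb]
    rcases le_or_gt (2 * (p - k)) s with h2 | h2
    · exact lemMono s k (p - k) (by omega) h2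
    · -- 2(p-k) > s = m+p, so m < p - 2k; use symmetry F s (p-k) = F s (m+k)
      have hps : p - k ≤ s := by omega
      have hsym : s - (p - k) = m + k := by omega
      have hsym2 : s - (m + k) = p - k := by omega
      rw [hsym]
      have : (p-k)^(p-k) * (m+k)^(m+k) = (m+k)^(m+k) * (s-(m+k))^(s-(m+k)) := by
        rw [hsym2]; ring
      rw [this]
      exact lemMono s k (m + k) (by omega) (by omega)
  calc Nat.choose p k * (p-k)^(p-k) * (m+k)^(m+k)
      = Nat.choose p k * ((p-k)^(p-k) * (m+k)^(m+k)) := by ring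
    _ ≤ Nat.choose p k * (k^k * (s-k)^(s-k)) := Nat.mul_le_mul_left _ core
    _ = Nat.choose p k * k^k * (s-k)^(s-k) := by ring
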